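/- Let f be a monoid automorphism of P_fin0(ℕ) with f({0,2,3}) = {0,2,3}. Then for every X ∈ P_fin0(ℕ) with 1 ∈ X, we have 1 ∈ f(X); moreover f({0, a, a+1}) = {0, a, a+1} for every a ∈ ℕ. -/

import Mathlib

open Pointwise

/-- The reduced power monoid `P_fin0(ℕ)`: finite subsets of ℕ containing 0,
under setwise (pointwise) addition. -/
def P0 : AddSubmonoid (Finset ℕ) where
  carrier := {X : Finset ℕ | (0 : ℕ) ∈ X}
  add_mem' := fun hx hy => by simpa using Finset.add_mem_add hx hy
  zero_mem' := by simp [Finset.mem_zero]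

/-- Maximum of a set in `P0`. -/
def mx (X : P0) : ℕ := X.1.max' ⟨0, X.2⟩

theorem mem_P0 {X : Finset ℕ} : X ∈ P0 ↔ (0 : ℕ) ∈ X := Iff.rfl

namespace Aux

def Cp : P0 := ⟨({0,2,3} : Finset ℕ), mem_P0.2 (by simp)⟩
def b1 : P0 := ⟨({0,1} : Finset ℕ), mem_P0.2 (by simp)⟩
def Iv (n : ℕ) : P0 := ⟨Finset.range (n+1), mem_P0.2 (by simp)⟩
def TkP (k : ℕ) : P0 := ⟨insert 0 (Finset.Icc 2 (3*k)), mem_P0.2 (by simp)⟩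

lemma zmem (X : P0) : (0:ℕ) ∈ X.1 := X.2

lemma memAdd {X Y : P0} {t : ℕ} : t ∈ (X + Y).1 ↔ ∃ x ∈ X.1, ∃ y ∈ Y.1, x + y = t :=
  Finset.mem_add

lemma le_mx {X : P0} {x : ℕ} (hx : x ∈ X.1) : x ≤ mx X := Finset.le_max' _ _ hx

lemma mx_mem (X : P0) : mx X ∈ X.1 := Finset.max'_mem _ _

lemma mx_add (X Y : P0) : mx (X + Y) = mx X + mx Y := by
  apply le_antisymm
  · apply Finset.max'_le
    intro t ht
    rcases memAdd.1 ht with ⟨x, hx, y, hy, rfl⟩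
    exact Nat.add_le_add (le_mx hx) (le_mx hy)
  · exact Finset.le_max' _ _ (memAdd.2 ⟨mx X, mx_mem X, mx Y, mx_mem Y, rfl⟩)

lemma mem_Iv {n t : ℕ} : t ∈ (Iv n).1 ↔ t ≤ n := by
  simp [Iv, Finset.mem_range, Nat.lt_succ_iff]

lemma mx_Iv (n : ℕ) : mx (Iv n) = n := by
  apply le_antisymm
  · apply Finset.max'_le; intro t ht; exact mem_Iv.1 ht
  · exact Finset.le_max' _ _ (mem_Iv.2 le_rfl)

lemma Iv_add (a b : ℕ) : Iv a + Iv b = Iv (a + b) := by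
  apply Subtype.ext; apply Finset.ext; intro t
  constructor
  · intro ht
    rcases memAdd.1 ht with ⟨x, hx, y, hy, rfl⟩
    exact mem_Iv.2 (Nat.add_le_add (mem_Iv.1 hx) (mem_Iv.1 hy))
  · intro ht
    have h := mem_Iv.1 ht
    rcases le_or_gt t a with h1 | h1
    · exact memAdd.2 ⟨t, mem_Iv.2 h1, 0, mem_Iv.2 (Nat.zero_le _), by omega⟩
    · exact memAdd.2 ⟨a, mem_Iv.2 le_rfl, t - a, mem_Iv.2 (by omega), by omega⟩

lemma Iv_zero : Iv 0 = 0 := by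
  apply Subtype.ext; apply Finset.ext; intro t
  simp [Iv, Finset.mem_range, Finset.mem_zero, Nat.lt_one_iff]

lemma Iv_one : Iv 1 = b1 := by
  apply Subtype.ext; decide

lemma mx_zero : mx (0 : P0) = 0 := by
  have : mx 0 ∈ (0 : P0).1 := mx_mem 0
  simpa [Finset.mem_zero] using this

lemma mx_eq_zero {X : P0} (h : mx X = 0) : X = 0 := by
  apply Subtype.ext; apply Finset.ext; intro t
  rw [show ((0:P0)).1 = (0 : Finset ℕ) from rfl]
  simp only [Finset.mem_zero]
  constructor
  · intro ht; have := le_mx ht; omega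
  · rintro rfl; exact zmem X

lemma mem_Tk {k t : ℕ} : t ∈ (TkP k).1 ↔ t = 0 ∨ (2 ≤ t ∧ t ≤ 3*k) := by
  simp [TkP, Finset.mem_insert, Finset.mem_Icc]

lemma Tk_zero : TkP 0 = 0 := by
  apply Subtype.ext; apply Finset.ext; intro t
  rw [show ((0:P0)).1 = (0 : Finset ℕ) from rfl]
  simp only [Finset.mem_zero]
  rw [show (TkP 0).1 = insert 0 (Finset.Icc 2 (3*0)) from rfl]
  simp only [Finset.mem_insert, Finset.mem_Icc]
  omega

lemma mem_Cp {t : ℕ} : t ∈ Cp.1 ↔ t = 0 ∨ t = 2 ∨ t = 3 := by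
  rw [show Cp.1 = ({0,2,3} : Finset ℕ) from rfl]
  simp only [Finset.mem_insert, Finset.mem_singleton]

lemma Tk_step (k : ℕ) : Cp + TkP k = TkP (k+1) := by
  apply Subtype.ext; apply Finset.ext; intro t
  constructor
  · intro ht
    rcases memAdd.1 ht with ⟨c, hc, s, hs, rfl⟩
    rcases mem_Cp.1 hc with rfl | rfl | rfl <;>
      rcases mem_Tk.1 hs with rfl | ⟨h1, h2⟩ <;> (apply mem_Tk.2; omega)
  · intro ht
    rcases mem_Tk.1 ht with rfl | ⟨h1, h2⟩
    · exact memAdd.2 ⟨0, mem_Cp.2 (by omega), 0, mem_Tk.2 (by omega), rfl⟩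
    rcases Nat.eq_zero_or_pos k with rfl | hk
    · -- t ∈ [2,3]
      refine memAdd.2 ⟨t, mem_Cp.2 (by omega), 0, mem_Tk.2 (by omega), by omega⟩
    rcases le_or_gt t (3*k) with h3 | h3
    · exact memAdd.2 ⟨0, mem_Cp.2 (by omega), t, mem_Tk.2 (by omega), by omega⟩
    rcases le_or_gt t (3*k+1) with h4 | h4
    · exact memAdd.2 ⟨2, mem_Cp.2 (by omega), 3*k - 1, mem_Tk.2 (by omega), by omega⟩
    rcases le_or_gt t (3*k+2) with h5 | h5
    · exact memAdd.2 ⟨2, mem_Cp.2 (by omega), 3*k, mem_Tk.2 (by omega), by omega⟩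
    · exact memAdd.2 ⟨3, mem_Cp.2 (by omega), 3*k, mem_Tk.2 (by omega), by omega⟩

end Aux

namespace Aux

variable (g : P0 ≃+ P0) (hg : g Cp = Cp)

lemma b1_Cp : b1 + Cp = Iv 4 := by apply Subtype.ext; decide

lemma Iv4_eq : b1 + b1 + b1 + b1 = Iv 4 := by
  rw [← Iv_one, Iv_add, Iv_add, Iv_add]

include hg

lemma fix_b1 : g b1 = b1 := by
  have h1 : g b1 + Cp = g b1 + g b1 + g b1 + g b1 := by
    rw [← hg, ← map_add, ← map_add, ← map_add, ← map_add, b1_Cp, Iv4_eq]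
  have h2 : mx (g b1) + 3 = mx (g b1) + mx (g b1) + mx (g b1) + mx (g b1) := by
    have := congrArg mx h1
    rwa [mx_add, mx_add, mx_add, mx_add, show mx Cp = 3 by
      apply le_antisymm
      · apply Finset.max'_le; intro t ht; rcases mem_Cp.1 ht with rfl | rfl | rfl <;> omega
      · exact Finset.le_max' _ _ (mem_Cp.2 (by omega))] at this
  have hv : mx (g b1) = 1 := by omega
  apply Subtype.ext; apply Finset.ext; intro t
  rw [show b1.1 = ({0,1} : Finset ℕ) from rfl]
  simp only [Finset.mem_insert, Finset.mem_singleton]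
  constructor
  · intro ht; have := le_mx ht; omega
  · rintro (rfl | rfl)
    · exact zmem _
    · have := mx_mem (g b1); rwa [hv] at this

lemma fix_Iv : ∀ n, g (Iv n) = Iv n := by
  intro n
  induction n with
  | zero => rw [Iv_zero, map_zero]
  | succ n ih =>
    rw [← Iv_add n 1, map_add, ih, Iv_one, fix_b1 g hg]

lemma mx_g (X : P0) : mx (g X) = mx X := by
  rcases Nat.eq_zero_or_pos (mx X) with h0 | hpos
  · rw [mx_eq_zero h0, map_zero]
  · have key : X + Iv (mx X - 1) = Iv (mx X + (mx X - 1)) := by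
      apply Subtype.ext; apply Finset.ext; intro t
      constructor
      · intro ht
        rcases memAdd.1 ht with ⟨x, hx, s, hs, rfl⟩
        exact mem_Iv.2 (by have := le_mx hx; have := mem_Iv.1 hs; omega)
      · intro ht
        have h := mem_Iv.1 ht
        rcases le_or_gt t (mx X - 1) with h1 | h1
        · exact memAdd.2 ⟨0, zmem X, t, mem_Iv.2 (by omega), by omega⟩
        · exact memAdd.2 ⟨mx X, mx_mem X, t - mx X, mem_Iv.2 (by omega), by omega⟩
    have key2 : g X + Iv (mx X - 1) = Iv (mx X + (mx X - 1)) := by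
      rw [← fix_Iv g hg (mx X - 1), ← map_add, key, fix_Iv g hg]
    have h3 := congrArg mx key2
    rw [mx_add, mx_Iv, mx_Iv] at h3
    omega

end Aux

namespace Aux

variable (g : P0 ≃+ P0) (hg : g Cp = Cp)

include hg in
lemma fix_Tk : ∀ k, g (TkP k) = TkP k := by
  intro k
  induction k with
  | zero => rw [Tk_zero, map_zero]
  | succ k ih => rw [← Tk_step, map_add, hg, ih]

lemma gapFull (X : P0) (h1 : (1:ℕ) ∈ X.1) :
    X + TkP (mx X + 1) = Iv (mx X + 3*(mx X + 1)) := by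
  apply Subtype.ext; apply Finset.ext; intro t
  constructor
  · intro ht
    rcases memAdd.1 ht with ⟨x, hx, s, hs, rfl⟩
    have hxm := le_mx hx
    rcases mem_Tk.1 hs with rfl | ⟨hs1, hs2⟩ <;> exact mem_Iv.2 (by omega)
  · intro ht
    have h := mem_Iv.1 ht
    rcases Nat.lt_or_ge t 2 with h2 | h2
    · rcases (by omega : t = 0 ∨ t = 1) with rfl | rfl
      · exact memAdd.2 ⟨0, zmem X, 0, mem_Tk.2 (by omega), by omega⟩
      · exact memAdd.2 ⟨1, h1, 0, mem_Tk.2 (by omega), by omega⟩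
    rcases le_or_gt t (3*(mx X + 1)) with h3 | h3
    · exact memAdd.2 ⟨0, zmem X, t, mem_Tk.2 (by omega), by omega⟩
    · exact memAdd.2 ⟨mx X, mx_mem X, t - mx X, mem_Tk.2 (by omega), by omega⟩

include hg in
lemma partA (X : P0) (h1 : (1:ℕ) ∈ X.1) : (1:ℕ) ∈ (g X).1 := by
  have key : g X + TkP (mx X + 1) = Iv (mx X + 3*(mx X + 1)) := by
    rw [← fix_Tk g hg (mx X + 1), ← map_add, gapFull X h1, fix_Iv g hg]
  have h2 : (1:ℕ) ∈ (g X + TkP (mx X + 1)).1 := by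
    rw [key]; exact mem_Iv.2 (by omega)
  rcases memAdd.1 h2 with ⟨x, hx, s, hs, hxs⟩
  rcases mem_Tk.1 hs with rfl | ⟨hs1, hs2⟩
  · rwa [show x = 1 by omega] at hx
  · omega

end Aux

namespace Aux

def Dp (a : ℕ) : P0 := ⟨({0, a, a + 1} : Finset ℕ), mem_P0.2 (by simp)⟩

lemma mem_Dp {a t : ℕ} : t ∈ (Dp a).1 ↔ t = 0 ∨ t = a ∨ t = a + 1 := by
  rw [show (Dp a).1 = ({0, a, a+1} : Finset ℕ) from rfl]
  simp only [Finset.mem_insert, Finset.mem_singleton]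

lemma mx_Dp (a : ℕ) : mx (Dp a) = a + 1 := by
  apply le_antisymm
  · apply Finset.max'_le; intro t ht
    rcases mem_Dp.1 ht with rfl | rfl | rfl <;> omega
  · exact Finset.le_max' _ _ (mem_Dp.2 (by omega))

lemma DpIv1 {a : ℕ} (ha : 2 ≤ a) : Dp a + Iv (a - 1) = Iv (2 * a) := by
  apply Subtype.ext; apply Finset.ext; intro t
  constructor
  · intro ht
    rcases memAdd.1 ht with ⟨x, hx, s, hs, rfl⟩
    have hsle := mem_Iv.1 hs
    rcases mem_Dp.1 hx with rfl | rfl | rfl <;> exact mem_Iv.2 (by omega)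
  · intro ht
    have h := mem_Iv.1 ht
    rcases le_or_gt t (a - 1) with c1 | c1
    · exact memAdd.2 ⟨0, mem_Dp.2 (by omega), t, mem_Iv.2 (by omega), by omega⟩
    rcases le_or_gt t (2 * a - 1) with c2 | c2
    · exact memAdd.2 ⟨a, mem_Dp.2 (by omega), t - a, mem_Iv.2 (by omega), by omega⟩
    · exact memAdd.2 ⟨a + 1, mem_Dp.2 (by omega), a - 1, mem_Iv.2 (by omega), by omega⟩

lemma Dp_ne {a : ℕ} (ha : 2 ≤ a) : a - 1 ∉ (Dp a + Iv (a - 2)).1 := by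
  intro h
  rcases memAdd.1 h with ⟨x, hx, s, hs, hxs⟩
  have hsle := mem_Iv.1 hs
  rcases mem_Dp.1 hx with rfl | rfl | rfl <;> omega

variable (g : P0 ≃+ P0) (hg : g Cp = Cp)

include hg in
lemma partB2 {a : ℕ} (ha : 2 ≤ a) : g (Dp a) = Dp a := by
  set E := g (Dp a) with hE
  have hmxE : mx E = a + 1 := by rw [hE, mx_g g hg, mx_Dp]
  have hEtop : a + 1 ∈ E.1 := hmxE ▸ mx_mem E
  have hle : ∀ x ∈ E.1, x ≤ a + 1 := fun x hx => hmxE ▸ le_mx hx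
  have h1E : (1 : ℕ) ∉ E.1 := by
    intro h
    have hg' : g.symm Cp = Cp := by
      conv_lhs => rw [← hg]
      rw [AddEquiv.symm_apply_apply]
    have h2 := partA g.symm hg' E h
    rw [hE, AddEquiv.symm_apply_apply] at h2
    rcases mem_Dp.1 h2 with h3 | h3 | h3 <;> omega
  have heq1 : E + Iv (a - 1) = Iv (2 * a) := by
    rw [hE, ← fix_Iv g hg (a - 1), ← map_add, DpIv1 ha, fix_Iv g hg]
  have hne : E + Iv (a - 2) ≠ Iv (2 * a - 1) := by
    intro h
    have h2 : g (Dp a + Iv (a - 2)) = g (Iv (2 * a - 1)) := by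
      rw [map_add, fix_Iv g hg, ← hE, h, fix_Iv g hg]
    have h3 := g.injective h2
    apply Dp_ne ha
    rw [h3]
    exact mem_Iv.2 (by omega)
  have hmid : ∀ e ∈ E.1, ¬(2 ≤ e ∧ e ≤ a - 1) := by
    rintro e he ⟨he1, he2⟩
    apply hne
    apply Subtype.ext; apply Finset.ext; intro t
    constructor
    · intro ht
      rcases memAdd.1 ht with ⟨x, hx, s, hs, rfl⟩
      have := hle x hx; have := mem_Iv.1 hs
      exact mem_Iv.2 (by omega)
    · intro ht
      have h := mem_Iv.1 ht
      rcases le_or_gt t (a - 2) with c1 | c1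
      · exact memAdd.2 ⟨0, zmem _, t, mem_Iv.2 (by omega), by omega⟩
      rcases le_or_gt t a with c2 | c2
      · exact memAdd.2 ⟨e, he, t - e, mem_Iv.2 (by omega), by omega⟩
      · exact memAdd.2 ⟨a + 1, hEtop, t - (a + 1), mem_Iv.2 (by omega), by omega⟩
  have haE : a ∈ E.1 := by
    have h2 : a ∈ (E + Iv (a - 1)).1 := by rw [heq1]; exact mem_Iv.2 (by omega)
    rcases memAdd.1 h2 with ⟨x, hx, s, hs, hxs⟩
    have hsle := mem_Iv.1 hs
    have hxle := hle x hx
    have hx1 : x ≠ 1 := fun h => h1E (h ▸ hx)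
    have hmx := hmid x hx
    have hxa : x = a := by
      rcases le_or_gt 2 x with h4 | h4
      · rcases le_or_gt x (a - 1) with h5 | h5
        · exact absurd ⟨h4, h5⟩ hmx
        · omega
      · omega
    exact hxa ▸ hx
  apply Subtype.ext; apply Finset.ext; intro t
  rw [show (Dp a).1 = ({0, a, a + 1} : Finset ℕ) from rfl]
  simp only [Finset.mem_insert, Finset.mem_singleton]
  constructor
  · intro ht
    have h2 := hle t ht
    have h3 : t ≠ 1 := fun h => h1E (h ▸ ht)
    have h4 := hmid t ht
    rcases le_or_gt 2 t with h5 | h5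
    · rcases le_or_gt t (a - 1) with h6 | h6
      · exact absurd ⟨h5, h6⟩ h4
      · omega
    · omega
  · rintro (rfl | rfl | rfl)
    · exact zmem _
    · exact haE
    · exact hEtop

include hg in
lemma partB (a : ℕ) : g (Dp a) = Dp a := by
  match a with
  | 0 =>
    have h : Dp 0 = b1 := Subtype.ext (by decide)
    rw [h]; exact fix_b1 g hg
  | 1 =>
    have h : Dp 1 = Iv 2 := Subtype.ext (by decide)
    rw [h]; exact fix_Iv g hg 2
  | (a + 2) => exact partB2 g hg (by omega)

end Aux

/-- if an automorphism `f` of P_fin0(ℕ) fixes `{0,2,3}`, then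
`1 ∈ X` implies `1 ∈ f(X)`, and `f` fixes every set `{0, a, a+1}`. -/
theorem stmt18 (f : P0 ≃+ P0)
    (hf : f ⟨({0, 2, 3} : Finset ℕ), by simp [mem_P0]⟩ = ⟨({0, 2, 3} : Finset ℕ), by simp [mem_P0]⟩) :
    (∀ X : P0, (1 : ℕ) ∈ X.1 → (1 : ℕ) ∈ (f X).1) ∧
    (∀ a : ℕ, f ⟨({0, a, a + 1} : Finset ℕ), by simp [mem_P0]⟩
        = ⟨({0, a, a + 1} : Finset ℕ), by simp [mem_P0]⟩) := by
  have hfC : f Aux.Cp = Aux.Cp := hf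
  exact ⟨fun X h1 => Aux.partA f hfC X h1, fun a => Aux.partB f hfC a⟩
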